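/- In the generalized loop Witt algebra L acting on V = L⊗L ≅ (W⊗W)[x^{±1}, y^{±1}], the element r = (L_0 ⊗ L_0) f₀(x,y) satisfies L_{α,0}·r ∈ Im(1⊗1−τ) for all α ∈ Γ if and only if f₀(x,y) + f₀(y,x) = 0, in which case r ∈ Im(1⊗1−τ). -/

import Mathlib

open Finsupp TensorProduct

/-- Bracket of the generalized loop Witt algebra `[L_{α,i},L_{β,j}] = (β−α)L_{α+β,i+j}`. -/
noncomputable def bk2 {F : Type*} [Field F] (Γ : AddSubgroup F) :
    ((Γ × ℤ) →₀ F) →ₗ[F] ((Γ × ℤ) →₀ F) →ₗ[F] ((Γ × ℤ) →₀ F) :=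
  Finsupp.lsum F fun p => LinearMap.toSpanSingleton F _
    (Finsupp.lsum F fun q =>
      (((q.1 : F) - (p.1 : F)) • Finsupp.lsingle (p.1 + q.1, p.2 + q.2) : F →ₗ[F] _))

/-- Diagonal adjoint action of `L` on `L ⊗ L`. -/
noncomputable def act {F : Type*} [Field F] (Γ : AddSubgroup F) (x : (Γ × ℤ) →₀ F) :
    (((Γ × ℤ) →₀ F) ⊗[F] ((Γ × ℤ) →₀ F)) →ₗ[F] (((Γ × ℤ) →₀ F) ⊗[F] ((Γ × ℤ) →₀ F)) :=
  LinearMap.rTensor _ (bk2 Γ x) + LinearMap.lTensor _ (bk2 Γ x)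

/-- The twist map `τ(L_α xⁱyʲ ⊗ L_β) = ...`, i.e. `τ(u ⊗ v) = v ⊗ u`. -/
noncomputable def tw {F : Type*} [Field F] (Γ : AddSubgroup F) :
    (((Γ × ℤ) →₀ F) ⊗[F] ((Γ × ℤ) →₀ F)) →ₗ[F] (((Γ × ℤ) →₀ F) ⊗[F] ((Γ × ℤ) →₀ F)) :=
  (TensorProduct.comm F _ _).toLinearMap

/-- The element `r = (L_0 ⊗ L_0) f₀(x,y) = Σ_{i,j} f₀(i,j) · L_{0,i} ⊗ L_{0,j}`,
where `f₀ ∈ F[x^{±1},y^{±1}]` is encoded by its (finitely many) coefficients. -/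
noncomputable def rOf {F : Type*} [Field F] (Γ : AddSubgroup F) (f : (ℤ × ℤ) →₀ F) :
    ((Γ × ℤ) →₀ F) ⊗[F] ((Γ × ℤ) →₀ F) :=
  f.sum fun p c => c •
    ((Finsupp.single ((0 : Γ), p.1) (1 : F)) ⊗ₜ[F] (Finsupp.single ((0 : Γ), p.2) (1 : F)))

/-- Shortcut instance: `Zero` synthesis on this tensor product otherwise fails. -/
noncomputable instance tensorFinsuppZero {F : Type*} [Field F] (Γ : AddSubgroup F) :
    Zero (((Γ × ℤ) →₀ F) ⊗[F] ((Γ × ℤ) →₀ F)) :=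
  (inferInstance : AddMonoid _).toZero

section Aux
variable {F : Type*} [Field F] [CharZero F] (Γ : AddSubgroup F)

lemma tw_tmul (a b : (Γ × ℤ) →₀ F) : tw Γ (a ⊗ₜ[F] b) = b ⊗ₜ[F] a := rfl

lemma tw_invol (v : ((Γ × ℤ) →₀ F) ⊗[F] ((Γ × ℤ) →₀ F)) : tw Γ (tw Γ v) = v := by
  refine v.induction_on ?_ (fun a b => ?_) (fun a b ha hb => ?_)
  · simp
  · rfl
  · simp only [map_add, ha, hb]

lemma mem_range_iff (v : ((Γ × ℤ) →₀ F) ⊗[F] ((Γ × ℤ) →₀ F)) :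
    (∃ u, u - tw Γ u = v) ↔ v + tw Γ v = 0 := by
  constructor
  · rintro ⟨u, rfl⟩
    rw [map_sub, tw_invol]
    abel
  · intro h
    refine ⟨(2:F)⁻¹ • v, ?_⟩
    have htv : tw Γ v = -v := by rw [add_comm] at h; exact eq_neg_of_add_eq_zero_left (a := tw Γ v) (b := v) h
    rw [map_smul, htv]
    match_scalars
    norm_num

lemma sym_sum_zero (f : (ℤ × ℤ) →₀ F)
    (hf : ∀ i j : ℤ, f (i, j) + f (j, i) = 0)
    (S : ℤ × ℤ → (((Γ × ℤ) →₀ F) ⊗[F] ((Γ × ℤ) →₀ F)))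
    (hS : ∀ p : ℤ × ℤ, S p.swap = S p) :
    (f.sum fun p c => c • S p) = 0 := by
  set T := f.sum fun p c => c • S p with hT
  set fsw : (ℤ × ℤ) →₀ F := f.equivMapDomain (Equiv.prodComm ℤ ℤ) with hfsw
  have h1 : fsw.sum (fun p c => c • S p) = T := by
    rw [hfsw, Finsupp.sum_equivMapDomain]
    exact Finsupp.sum_congr fun p _ => by rw [Equiv.coe_prodComm, hS p]
  have h2 : f + fsw = 0 := by
    ext p
    have := hf p.1 p.2
    simp only [hfsw, Finsupp.coe_add, Pi.add_apply, Finsupp.equivMapDomain_apply,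
      Equiv.prodComm_symm, Equiv.coe_prodComm, Finsupp.coe_zero, Pi.zero_apply]
    simpa [Prod.swap] using this
  have h3 : (f + fsw).sum (fun p c => c • S p) = T + T := by
    rw [Finsupp.sum_add_index (by simp) (by intros; rw [add_smul]), h1]
  rw [h2] at h3
  simp only [Finsupp.sum_zero_index] at h3
  have h4 : (2 : F) • T = 0 := by rw [two_smul]; exact h3.symm
  rcases smul_eq_zero.mp h4 with h | h
  · norm_num at h
  · exact h

lemma bk2_single (p q : Γ × ℤ) :
    bk2 Γ (Finsupp.single p 1) (Finsupp.single q 1)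
      = ((q.1 : F) - p.1) • Finsupp.single (p.1 + q.1, p.2 + q.2) 1 := by
  simp [bk2]

lemma act_tmul (α : Γ) (i j : ℤ) :
    act Γ (Finsupp.single ((α, 0) : Γ × ℤ) (1 : F))
        (Finsupp.single ((0 : Γ), i) (1 : F) ⊗ₜ[F] Finsupp.single ((0 : Γ), j) (1 : F))
      = (-(α : F)) • (Finsupp.single (α, i) (1 : F) ⊗ₜ[F] Finsupp.single ((0 : Γ), j) (1 : F))
        + (-(α : F)) • (Finsupp.single ((0 : Γ), i) (1 : F) ⊗ₜ[F]
            Finsupp.single (α, j) (1 : F)) := by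
  have h1 := bk2_single Γ ((α, 0) : Γ × ℤ) ((0 : Γ), i)
  have h2 := bk2_single Γ ((α, 0) : Γ × ℤ) ((0 : Γ), j)
  simp only [add_zero, zero_add, AddSubgroup.coe_zero, zero_sub] at h1 h2
  simp only [act, LinearMap.add_apply, LinearMap.rTensor_tmul, LinearMap.lTensor_tmul, h1, h2,
    TensorProduct.smul_tmul', TensorProduct.tmul_smul]

/-- the four-term symmetric tensor -/
noncomputable def Sfour (α : Γ) (p : ℤ × ℤ) : ((Γ × ℤ) →₀ F) ⊗[F] ((Γ × ℤ) →₀ F) :=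
  (-(α : F)) • (Finsupp.single (α, p.1) (1 : F) ⊗ₜ[F] Finsupp.single ((0 : Γ), p.2) (1 : F)
    + Finsupp.single ((0 : Γ), p.1) (1 : F) ⊗ₜ[F] Finsupp.single (α, p.2) (1 : F)
    + Finsupp.single ((0 : Γ), p.2) (1 : F) ⊗ₜ[F] Finsupp.single (α, p.1) (1 : F)
    + Finsupp.single (α, p.2) (1 : F) ⊗ₜ[F] Finsupp.single ((0 : Γ), p.1) (1 : F))

lemma Sfour_swap (α : Γ) (p : ℤ × ℤ) : Sfour Γ α p.swap = Sfour Γ α p := by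
  simp only [Sfour, Prod.swap]
  congr 1
  abel

lemma key_sum (α : Γ) (f : (ℤ × ℤ) →₀ F) :
    act Γ (Finsupp.single ((α, 0) : Γ × ℤ) (1 : F)) (rOf Γ f)
      + tw Γ (act Γ (Finsupp.single ((α, 0) : Γ × ℤ) (1 : F)) (rOf Γ f))
      = f.sum fun p c => c • Sfour Γ α p := by
  rw [rOf, map_finsuppSum, map_finsuppSum, ← Finsupp.sum_add]
  refine Finsupp.sum_congr fun p _ => ?_
  rw [map_smul, act_tmul, map_smul, ← smul_add]
  congr 1
  rw [map_add, map_smul, map_smul, tw_tmul, tw_tmul, Sfour]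
  rw [smul_add, smul_add, smul_add]
  abel

lemma r_sum (f : (ℤ × ℤ) →₀ F) :
    rOf Γ f + tw Γ (rOf Γ f)
      = f.sum fun p c => c •
          (Finsupp.single ((0 : Γ), p.1) (1 : F) ⊗ₜ[F] Finsupp.single ((0 : Γ), p.2) (1 : F)
           + Finsupp.single ((0 : Γ), p.2) (1 : F) ⊗ₜ[F] Finsupp.single ((0 : Γ), p.1) (1 : F)) := by
  rw [rOf, map_finsuppSum, ← Finsupp.sum_add]
  refine Finsupp.sum_congr fun p _ => ?_
  rw [map_smul, tw_tmul, ← smul_add]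

end Aux

set_option maxHeartbeats 1600000 in
/-- `r = (L_0⊗L_0) f₀(x,y)` satisfies `L_{α,0}·r ∈ Im(1⊗1−τ)` for all
`α ∈ Γ` iff `f₀(x,y) + f₀(y,x) = 0`, in which case `r ∈ Im(1⊗1−τ)`. -/
theorem L0_tensor_L0_antisymmetry
    {F : Type*} [Field F] [CharZero F] (Γ : AddSubgroup F) (h1 : (1 : F) ∈ Γ)
    (hne : ∃ α : Γ, α ≠ 0) (f : (ℤ × ℤ) →₀ F) :
    ((∀ α : Γ, act Γ (Finsupp.single ((α, 0) : Γ × ℤ) (1 : F)) (rOf Γ f) ∈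
        Set.range fun u => u - tw Γ u) ↔ (∀ i j : ℤ, f (i, j) + f (j, i) = 0)) ∧
    ((∀ i j : ℤ, f (i, j) + f (j, i) = 0) → ∃ u, rOf Γ f = u - tw Γ u) := by
  classical
  have hrange : ∀ v, (v ∈ Set.range fun u => u - tw Γ u) ↔ v + tw Γ v = 0 := by
    intro v
    rw [Set.mem_range]
    exact mem_range_iff Γ v
  constructor
  · constructor
    · -- forward
      intro h i j
      obtain ⟨α, hα⟩ := hne
      have hv := (hrange _).mp (h α)
      rw [key_sum] at hv
      -- apply the equivalence E and evaluate
      set E := (finsuppTensorFinsupp' F (Γ × ℤ) (Γ × ℤ)).toLinearMap with hE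
      have hv2 : E (f.sum fun p c => c • Sfour Γ α p) = 0 := by rw [hv]; exact map_zero E
      rw [map_finsuppSum] at hv2
      have hEterm : ∀ p : ℤ × ℤ, ∀ c : F, E (c • Sfour Γ α p)
          = (-(α : F) * c) • (Finsupp.single ((α, p.1), ((0:Γ), p.2)) (1:F)
            + Finsupp.single (((0:Γ), p.1), (α, p.2)) 1
            + Finsupp.single (((0:Γ), p.2), (α, p.1)) 1
            + Finsupp.single ((α, p.2), ((0:Γ), p.1)) 1) := by
        intro p c
        rw [map_smul, Sfour, map_smul, map_add, map_add, map_add]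
        simp only [hE, LinearEquiv.coe_coe, finsuppTensorFinsupp'_single_tmul_single, one_mul]
        rw [smul_smul, mul_comm c]
      simp only [hEterm] at hv2
      have hval := congrArg (fun g => g ((α, i), ((0:Γ), j))) hv2
      simp only [Finsupp.sum_apply, Finsupp.coe_zero, Pi.zero_apply, Finsupp.smul_apply,
        Finsupp.add_apply, Finsupp.single_apply, smul_eq_mul] at hval
      have hαΓ : (0 : Γ) ≠ α := fun hc => hα hc.symm
      have hred : ∀ p : ℤ × ℤ, ∀ c : F,
          (-(α:F) * c) * ((if ((α, p.1), ((0:Γ), p.2)) = ((α, i), ((0:Γ), j)) then (1:F) else 0)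
            + (if (((0:Γ), p.1), (α, p.2)) = ((α, i), ((0:Γ), j)) then (1:F) else 0)
            + (if (((0:Γ), p.2), (α, p.1)) = ((α, i), ((0:Γ), j)) then (1:F) else 0)
            + (if ((α, p.2), ((0:Γ), p.1)) = ((α, i), ((0:Γ), j)) then (1:F) else 0))
          = (if p = (i, j) then (-(α:F) * c) else 0)
            + (if p = (j, i) then (-(α:F) * c) else 0) := by
        intro p c
        have e1 : (((α, p.1), ((0:Γ), p.2)) = ((α, i), ((0:Γ), j))) ↔ p = (i, j) := by
          constructor
          · intro h'; simp only [Prod.mk.injEq] at h'; exact Prod.ext h'.1.2 h'.2.2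
          · rintro rfl; rfl
        have e2 : ¬ ((((0:Γ), p.1), (α, p.2)) = ((α, i), ((0:Γ), j))) := by
          simp only [Prod.mk.injEq]; rintro ⟨⟨h', -⟩, -⟩; exact hαΓ h'
        have e3 : ¬ ((((0:Γ), p.2), (α, p.1)) = ((α, i), ((0:Γ), j))) := by
          simp only [Prod.mk.injEq]; rintro ⟨⟨h', -⟩, -⟩; exact hαΓ h'
        have e4 : (((α, p.2), ((0:Γ), p.1)) = ((α, i), ((0:Γ), j))) ↔ p = (j, i) := by
          constructor
          · intro h'; simp only [Prod.mk.injEq] at h'; exact Prod.ext h'.2.2 h'.1.2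
          · rintro rfl; rfl
        rw [if_neg e2, if_neg e3]
        simp only [e1, e4]
        split_ifs <;> ring
      have hval' : (f.sum fun p c => (if p = (i, j) then -(α:F) * c else 0)
          + (if p = (j, i) then -(α:F) * c else 0)) = 0 :=
        (Finsupp.sum_congr fun p _ => (hred p (f p)).symm).trans hval
      rw [Finsupp.sum_add] at hval'
      rw [Finsupp.sum_ite_eq' f (i, j) (fun _ c => -(α:F) * c),
        Finsupp.sum_ite_eq' f (j, i) (fun _ c => -(α:F) * c)] at hval'
      have hite : ∀ p : ℤ × ℤ, (if p ∈ f.support then -(α:F) * f p else 0) = -(α:F) * f p := by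
        intro p
        split_ifs with hmem
        · rfl
        · rw [Finsupp.notMem_support_iff.mp hmem, mul_zero]
      rw [hite, hite] at hval'
      have hval2 : -(α:F) * f (i, j) + -(α:F) * f (j, i) = 0 := hval'
      have : (f (i, j) + f (j, i)) * (-(α:F)) = 0 := by linear_combination hval2
      rcases mul_eq_zero.mp this with h' | h'
      · exact h'
      · exact absurd (neg_eq_zero.mp h') fun hc => hα (ZeroMemClass.coe_eq_zero.mp hc)
    · -- backward
      intro hf α
      rw [hrange, key_sum]
      exact sym_sum_zero Γ f hf _ (Sfour_swap Γ α)
  · intro hf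
    have h0 : rOf Γ f + tw Γ (rOf Γ f) = 0 := by
      rw [r_sum]
      refine sym_sum_zero Γ f hf _ fun p => ?_
      simp only [Prod.swap]
      abel
    obtain ⟨u, hu⟩ := (mem_range_iff Γ _).mpr h0
    exact ⟨u, hu.symm⟩
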